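/- For every positive natural number n, the third group homology of the cyclic group ℤ/nℤ with trivial integer coefficients has order n: Nat.card of the underlying module of groupHomology (Rep.trivial ℤ (Multiplicative (ZMod n)) ℤ) 3 equals n. (This is the computation |H₃(ℤ/nℤ;ℤ)| = n used in Section 6.1.1 to obtain the relative-bordism upper bound of n on the number of ρ̄-equivalence classes of knots coloured by a metacyclic group C_m ⋉ ℤ/nℤ.) -/

import Mathlib

open CategoryTheory

/-- Group homology `Hₙ(G; A)` of a representation `A : Rep ℤ G` of an abelian group `G`,
defined as `Torₙ^{ℤ[G]}(A, ℤ)` where `ℤ` carries the trivial `ℤ[G]`-module structure. -/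
noncomputable def groupHomologyTor {G : Type} [CommGroup G] (A : Rep ℤ G) (n : ℕ) :
    ModuleCat (MonoidAlgebra ℤ G) :=
  ((Tor (ModuleCat (MonoidAlgebra ℤ G)) n).obj
      (Rep.toModuleMonoidAlgebra.obj A)).obj
    (Rep.toModuleMonoidAlgebra.obj (Rep.trivial ℤ G ℤ))

namespace H3Aux

open MonoidAlgebra CategoryTheory.Limits

noncomputable section

/-- A general helper: if `k` is a cokernel of `S.f`, then `S.descOpcycles k hk` is an iso. -/
lemma isIso_descOpcycles_of_isColimit {C : Type*} [Category C] [Abelian C]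
    (S : ShortComplex C) {A : C} (k : S.X₂ ⟶ A) (hk : S.f ≫ k = 0)
    (k' : S.X₂ ⟶ A) (hk' : S.f ≫ k' = 0) (hkk : k = k')
    (hc : IsColimit (CokernelCofork.ofπ k' hk')) : IsIso (S.descOpcycles k hk) := by
  subst hkk
  let e := IsColimit.coconePointUniqueUpToIso S.opcyclesIsCokernel hc
  have h2 : S.pOpcycles ≫ e.hom = k := by
    simpa using IsColimit.comp_coconePointUniqueUpToIso_hom S.opcyclesIsCokernel hc
      WalkingParallelPair.one
  have h3 : S.descOpcycles k hk = e.hom := by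
    rw [← cancel_epi S.pOpcycles, S.p_descOpcycles, h2]
  rw [h3]
  infer_instance

variable (n : ℕ)

abbrev Gn := Multiplicative (ZMod n)
abbrev Rn := MonoidAlgebra ℤ (Gn n)

def gen : Gn n := Multiplicative.ofAdd 1

def sg : Rn n := MonoidAlgebra.of ℤ (Gn n) (gen n)

def eps : Rn n →ₐ[ℤ] ℤ := (MonoidAlgebra.lift ℤ ℤ (Gn n)) 1

@[simp] lemma eps_single (g : Gn n) (a : ℤ) : eps n (single g a) = a := by
  simp [eps]

lemma sg_pow (k : ℕ) : (sg n) ^ k = MonoidAlgebra.of ℤ (Gn n) ((gen n) ^ k) := by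
  rw [sg, ← map_pow]

lemma of_sub_one_mem (g : Gn n) [NeZero n] :
    MonoidAlgebra.of ℤ (Gn n) g - 1 ∈ Ideal.span {sg n - 1} := by
  have hg : (gen n) ^ (g.toAdd.val) = g := by
    show Multiplicative.ofAdd ((g.toAdd.val : ℕ) • (1 : ZMod n)) = g
    simp [nsmul_eq_mul, ZMod.natCast_val, ZMod.cast_id]
  have h2 : MonoidAlgebra.of ℤ (Gn n) g - 1
      = (∑ i ∈ Finset.range (g.toAdd.val), (sg n) ^ i) * (sg n - 1) := by
    rw [geom_sum_mul, sg_pow, hg]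
  rw [h2]
  exact Ideal.mul_mem_left _ _ (Ideal.subset_span rfl)

lemma mem_span_of_eps_eq_zero [NeZero n] (r : Rn n) (hr : eps n r = 0) :
    r ∈ Ideal.span {sg n - 1} := by
  have hrsum : r = ∑ g ∈ r.coeff.support, single g (r.coeff g) := (MonoidAlgebra.sum_coeff_single r).symm
  have heps : eps n r = ∑ g ∈ r.coeff.support, r.coeff g := by
    conv_lhs => rw [hrsum]
    rw [map_sum]
    simp
  have h1 : ∀ g : Gn n, (r.coeff g) • (MonoidAlgebra.of ℤ (Gn n) g) = single g (r.coeff g) := by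
    intro g; rw [MonoidAlgebra.of_apply, MonoidAlgebra.smul_single, smul_eq_mul, mul_one]
  have key : ∑ g ∈ r.coeff.support, (r.coeff g) • (MonoidAlgebra.of ℤ (Gn n) g - 1) = r := by
    simp only [smul_sub, Finset.sum_sub_distrib, h1]
    rw [← hrsum, ← Finset.sum_smul, ← heps, hr, zero_smul, sub_zero]
  rw [← key]
  exact Ideal.sum_mem _ fun g _ => by
    rw [zsmul_eq_mul]
    exact Ideal.mul_mem_left _ _ (of_sub_one_mem n g)

variable [NeZero n]

def Nrm : Rn n := ∑ g : Gn n, MonoidAlgebra.of ℤ (Gn n) g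

lemma of_mul_Nrm (g : Gn n) : MonoidAlgebra.of ℤ (Gn n) g * Nrm n = Nrm n := by
  rw [Nrm, Finset.mul_sum]
  simp only [← map_mul]
  exact Fintype.sum_equiv (Equiv.mulLeft g) _ _ (fun x => rfl)

lemma mul_Nrm (r : Rn n) : r * Nrm n = eps n r • Nrm n := by
  induction r using MonoidAlgebra.induction_on with
  | of g => rw [of_mul_Nrm]; simp
  | add f g hf hg => rw [add_mul, hf, hg, map_add, add_smul]
  | smul a f hf => rw [smul_mul_assoc, hf, map_smul, smul_assoc]

lemma Nrm_apply (g : Gn n) : (Nrm n).coeff g = 1 := by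
  rw [Nrm, MonoidAlgebra.coeff_sum, Finset.sum_apply']
  simp [MonoidAlgebra.of_apply, Finsupp.single_apply]

lemma sg_sub_one_mul_Nrm : (sg n - 1) * Nrm n = 0 := by
  rw [sub_mul, one_mul, sg, of_mul_Nrm, sub_self]

lemma Nrm_mul_sg_sub_one : Nrm n * (sg n - 1) = 0 := by
  rw [mul_comm, sg_sub_one_mul_Nrm]

lemma eps_Nrm : eps n (Nrm n) = n := by
  rw [Nrm, map_sum]
  simp [MonoidAlgebra.of_apply, Finset.card_univ]

lemma eps_eq_zero_of_mul_Nrm (r : Rn n) (h : r * Nrm n = 0) : eps n r = 0 := by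
  have h2 : eps n r • Nrm n = 0 := by rw [← mul_Nrm n r, h]
  have h3 : eps n r * (n : ℤ) = 0 := by
    have h4 := congrArg (eps n) h2
    rwa [map_smul, eps_Nrm, map_zero, smul_eq_mul] at h4
  rcases mul_eq_zero.mp h3 with h5 | h5
  · exact h5
  · exact absurd h5 (by exact_mod_cast (NeZero.ne n))

lemma exists_of_mul_sg_sub_one (r : Rn n) (h : r * (sg n - 1) = 0) :
    ∃ s : Rn n, s * Nrm n = r := by
  have hr' : r * sg n = r := by
    have h0 := h
    rwa [mul_sub, mul_one, sub_eq_zero] at h0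
  have hσ : ∀ g : Gn n, r.coeff (g * (gen n)⁻¹) = r.coeff g := by
    intro g
    have h3 := MonoidAlgebra.coeff_mul_single_apply r (1 : ℤ) (gen n) g
    rw [mul_one] at h3
    rw [← h3]
    show (r * sg n).coeff g = r.coeff g
    rw [hr']
  have hpow : ∀ k : ℕ, r.coeff ((gen n) ^ k) = r.coeff 1 := by
    intro k
    induction k with
    | zero => simp
    | succ k ih =>
      have h4 := hσ ((gen n) ^ k * gen n)
      rw [mul_inv_cancel_right] at h4
      rw [pow_succ, ← h4]
      exact ih
  have hconst : ∀ g : Gn n, r.coeff g = r.coeff 1 := by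
    intro g
    have hg : (gen n) ^ (g.toAdd.val) = g := by
      show Multiplicative.ofAdd ((g.toAdd.val : ℕ) • (1 : ZMod n)) = g
      simp [nsmul_eq_mul, ZMod.natCast_val, ZMod.cast_id]
    rw [← hg, hpow]
  refine ⟨single 1 (r.coeff 1), ?_⟩
  have h5 : single (1 : Gn n) (r.coeff 1) = (r.coeff 1) • (1 : Rn n) := by
    rw [MonoidAlgebra.one_def, MonoidAlgebra.smul_single, smul_eq_mul, mul_one]
  rw [h5, smul_mul_assoc, one_mul]
  ext g
  rw [MonoidAlgebra.coeff_smul_apply, Nrm_apply, smul_eq_mul, mul_one]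
  exact (hconst g).symm

/-! ### The trivial module -/

abbrev Tmod : ModuleCat (Rn n) :=
  Rep.toModuleMonoidAlgebra.obj (Rep.trivial ℤ (Gn n) ℤ)

def ev : Tmod n ≃+ ℤ := (Representation.asModuleEquiv ((Rep.trivial ℤ (Gn n) ℤ).ρ)).toAddEquiv

lemma asAlg_eq (c : Rn n) :
    Representation.asAlgebraHom ((Rep.trivial ℤ (Gn n) ℤ).ρ) c
      = (eps n c) • (LinearMap.id : ℤ →ₗ[ℤ] ℤ) := by
  induction c using MonoidAlgebra.induction_on with
  | of g =>
    rw [Representation.asAlgebraHom_of]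
    refine LinearMap.ext fun v => ?_
    show v = _
    simp [eps]
  | add f g hf hg => rw [map_add, hf, hg, map_add, add_smul]
  | smul a f hf => rw [map_smul, hf, map_smul, smul_assoc]

lemma ev_smul (c : Rn n) (x : Tmod n) : ev n (c • x) = eps n c * ev n x := by
  have h := Representation.asModuleEquiv_map_smul ((Rep.trivial ℤ (Gn n) ℤ).ρ) c x
  rw [asAlg_eq] at h
  simp [smul_eq_mul] at h
  exact h

lemma smul_T (c : Rn n) (x : Tmod n) : c • x = (eps n c) • x := by
  apply (ev n).injective
  rw [ev_smul, map_zsmul, smul_eq_mul]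

def x0 : Tmod n := (ev n).symm 1

lemma ev_smul_x0 (c : Rn n) : ev n (c • x0 n) = eps n c := by
  rw [ev_smul, x0, AddEquiv.apply_symm_apply, mul_one]

/-! ### The periodic resolution -/

abbrev Fr : ModuleCat (Rn n) := ModuleCat.of (Rn n) (Rn n)

def mulBy (c : Rn n) : Fr n ⟶ Fr n :=
  ModuleCat.ofHom (LinearMap.toSpanSingleton (Rn n) (Rn n) c)

@[simp] lemma mulBy_apply (c x : Rn n) : mulBy n c x = x * c := rfl

def cf (i : ℕ) : Rn n := if Even i then sg n - 1 else Nrm n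

lemma cf_succ_mul_cf (i : ℕ) : cf n (i + 1) * cf n i = 0 := by
  by_cases h : Even i
  · rw [cf, cf, if_pos h, if_neg (by simp [Nat.even_add_one, h])]
    exact Nrm_mul_sg_sub_one n
  · rw [cf, cf, if_neg h, if_pos (by simp [Nat.even_add_one, h])]
    exact sg_sub_one_mul_Nrm n

lemma mulBy_mul (a b : Rn n) : mulBy n a ≫ mulBy n b = mulBy n (a * b) :=
  ModuleCat.hom_ext (LinearMap.ext fun (x : Rn n) => mul_assoc x a b)

lemma mulBy_zero : mulBy n 0 = 0 :=
  ModuleCat.hom_ext (LinearMap.ext fun (x : Rn n) => mul_zero x)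

def cyc : ChainComplex (ModuleCat (Rn n)) ℕ :=
  ChainComplex.of (fun _ => Fr n) (fun i => mulBy n (cf n i)) (fun i => by
    rw [mulBy_mul, cf_succ_mul_cf, mulBy_zero])

def epshom : Fr n ⟶ Tmod n :=
  ModuleCat.ofHom (LinearMap.toSpanSingleton (Rn n) (Tmod n) (x0 n))

@[simp] lemma epshom_apply (r : Rn n) : epshom n r = r • x0 n := rfl

lemma ev_epshom (r : Rn n) : ev n (epshom n r) = eps n r := ev_smul_x0 n r

lemma epshom_eq_zero_iff (r : Rn n) : epshom n r = 0 ↔ eps n r = 0 := by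
  constructor
  · intro h
    rw [← ev_epshom n r, h, map_zero]
  · intro h
    apply (ev n).injective
    rw [map_zero, ev_epshom, h]

instance : Projective (Fr n) := ModuleCat.projective_of_free (Module.Basis.singleton PUnit.{1} (Rn n))

lemma cyc_d (i : ℕ) : (cyc n).d (i + 1) i = mulBy n (cf n i) := ChainComplex.of_d (fun _ => Fr n) (fun i => mulBy n (cf n i)) i

lemma eps_sg_sub_one : eps n (sg n - 1) = 0 := by
  rw [map_sub, map_one, sg, MonoidAlgebra.of_apply]
  rw [eps_single, sub_self]

lemma d10_eps : (cyc n).d 1 0 ≫ epshom n = 0 := by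
  rw [cyc_d]
  refine ModuleCat.hom_ext (LinearMap.ext fun (x : Rn n) => ?_)
  show epshom n (x * cf n 0) = 0
  rw [epshom_eq_zero_iff, cf, if_pos Even.zero, map_mul, eps_sg_sub_one, mul_zero]

def pres : cyc n ⟶ (ChainComplex.single₀ (ModuleCat (Rn n))).obj (Tmod n) :=
  (ChainComplex.toSingle₀Equiv (cyc n) (Tmod n)).symm ⟨epshom n, d10_eps n⟩

lemma pres_f_zero : (pres n).f 0 = epshom n := by
  rw [pres]
  exact ChainComplex.toSingle₀Equiv_symm_apply_f_zero _ _

lemma epshom_surjective : Function.Surjective (epshom n) := by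
  intro t
  refine ⟨single 1 (ev n t), ?_⟩
  apply (ev n).injective
  rw [ev_epshom, eps_single]

def S0 : ShortComplex (ModuleCat (Rn n)) :=
  ShortComplex.mk ((cyc n).d 1 0) (epshom n) (d10_eps n)

lemma S0_exact : (S0 n).Exact := by
  rw [ShortComplex.moduleCat_exact_iff]
  intro x hx
  have hx' : eps n x = 0 := (epshom_eq_zero_iff n x).mp hx
  obtain ⟨s, hs⟩ := Ideal.mem_span_singleton'.mp (mem_span_of_eps_eq_zero n x hx')
  refine ⟨s, ?_⟩
  show (cyc n).d 1 0 s = x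
  rw [cyc_d]
  show s * cf n 0 = x
  rw [cf, if_pos Even.zero]
  exact hs

instance : Epi (S0 n).g := by
  rw [ModuleCat.epi_iff_surjective]
  exact epshom_surjective n

instance pres_quasiIso : QuasiIso (pres n) := by
  constructor
  intro i
  rcases i with _ | i
  · rw [quasiIsoAt_iff' _ 1 0 0 (by simp) (by simp)]
    apply (ShortComplex.quasiIso_iff_isIso_descOpcycles _ ((cyc n).shape 0 0 (by simp)) rfl rfl).mpr
    refine isIso_descOpcycles_of_isColimit _ _ _ (epshom n) (d10_eps n) ?_ ?_
    · exact pres_f_zero n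
    · exact (S0_exact n).gIsCokernel
  · rw [quasiIsoAt_iff_exactAt' _ (i+1) (ChainComplex.exactAt_succ_single_obj _ _)]
    rw [HomologicalComplex.exactAt_iff' _ (i+2) (i+1) i (by simp) (by simp)]
    rw [ShortComplex.moduleCat_exact_iff]
    intro x hx
    rw [HomologicalComplex.shortComplexFunctor'_obj_g, cyc_d] at hx
    replace hx : (show Rn n from x) * cf n i = 0 := hx
    by_cases h : Even i
    · rw [cf, if_pos h] at hx
      obtain ⟨s, hs⟩ := exists_of_mul_sg_sub_one n x hx
      refine ⟨s, ?_⟩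
      rw [HomologicalComplex.shortComplexFunctor'_obj_f, cyc_d]
      show s * cf n (i + 1) = x
      rw [cf, if_neg (by simp [Nat.even_add_one, h])]
      exact hs
    · rw [cf, if_neg h] at hx
      have h2 : eps n x = 0 := eps_eq_zero_of_mul_Nrm n x hx
      obtain ⟨s, hs⟩ := Ideal.mem_span_singleton'.mp (mem_span_of_eps_eq_zero n x h2)
      refine ⟨s, ?_⟩
      rw [HomologicalComplex.shortComplexFunctor'_obj_f, cyc_d]
      show s * cf n (i + 1) = x
      rw [cf, if_pos (by simp [Nat.even_add_one, h])]
      exact hs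

def pr : ProjectiveResolution (Tmod n) where
  complex := cyc n
  projective i := by
    show Projective (Fr n)
    infer_instance
  π := pres n


/-! ### Tensoring and the homology computation -/

open MonoidalCategory

def FF : ModuleCat (Rn n) ⥤ ModuleCat (Rn n) :=
  (tensoringLeft (ModuleCat (Rn n))).obj (Tmod n)

instance : (FF n).Additive := by
  unfold FF
  infer_instance

def KK : ChainComplex (ModuleCat (Rn n)) ℕ :=
  ((FF n).mapHomologicalComplex (ComplexShape.down ℕ)).obj (cyc n)

def zsm (z : ℤ) : Tmod n ⟶ Tmod n :=
  ModuleCat.ofHom (z • (LinearMap.id : Tmod n →ₗ[Rn n] Tmod n))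

lemma zsm_zero : zsm n 0 = 0 := by
  rw [zsm, zero_smul]
  rfl

lemma square (c : Rn n) :
    (FF n).map (mulBy n c) ≫ (ρ_ (Tmod n)).hom = (ρ_ (Tmod n)).hom ≫ zsm n (eps n c) := by
  refine ModuleCat.hom_ext (TensorProduct.ext' fun (x : Tmod n) (r : Rn n) => ?_)
  show (ρ_ (Tmod n)).hom ((FF n).map (mulBy n c) (x ⊗ₜ r)) =
    zsm n (eps n c) ((ρ_ (Tmod n)).hom (x ⊗ₜ r))
  have h1 : (FF n).map (mulBy n c) (x ⊗ₜ r) = x ⊗ₜ (r * c) := rfl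
  have h2 : ∀ (y : Tmod n) (s : Rn n), (ρ_ (Tmod n)).hom (y ⊗ₜ s) = s • y :=
    fun y s => ModuleCat.MonoidalCategory.rightUnitor_hom_apply y s
  rw [h1, h2, h2]
  show (r * c) • x = eps n c • (r • x)
  rw [smul_T n (r * c) x, map_mul, smul_T n r x, smul_smul, mul_comm]

def S2 : ShortComplex (ModuleCat (Rn n)) :=
  ShortComplex.mk (zsm n (n : ℤ)) (0 : Tmod n ⟶ Tmod n) comp_zero

lemma KK_d (i : ℕ) : (KK n).d (i + 1) i = (FF n).map (mulBy n (cf n i)) := by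
  unfold KK
  rw [Functor.mapHomologicalComplex_obj_d, cyc_d]
  rfl

def iso3 : (KK n).sc' 4 3 2 ≅ S2 n := by
  refine ShortComplex.isoMk (ρ_ (Tmod n)) (ρ_ (Tmod n)) (ρ_ (Tmod n)) ?_ ?_
  · show (ρ_ (Tmod n)).hom ≫ zsm n (n : ℤ) = (KK n).d 4 3 ≫ (ρ_ (Tmod n)).hom
    rw [KK_d, show cf n 3 = Nrm n from by rw [cf, if_neg (by decide)]]
    have h := square n (Nrm n)
    rw [eps_Nrm] at h
    exact h.symm
  · show (ρ_ (Tmod n)).hom ≫ (0 : Tmod n ⟶ Tmod n) = (KK n).d 3 2 ≫ (ρ_ (Tmod n)).hom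
    rw [KK_d, show cf n 2 = sg n - 1 from by rw [cf, if_pos (by decide)]]
    have h := square n (sg n - 1)
    rw [eps_sg_sub_one, zsm_zero, comp_zero] at h
    rw [comp_zero]
    exact h.symm

def isoTot : groupHomologyTor (Rep.trivial ℤ (Gn n) ℤ) 3 ≅ (S2 n).moduleCatLeftHomologyData.H :=
  ((pr n).isoLeftDerivedObj (FF n) 3).trans
    (((KK n).homologyIsoSc' 4 3 2 (by simp) (by simp)).trans
      ((ShortComplex.homologyMapIso (iso3 n)).trans (S2 n).moduleCatHomologyIso))

lemma S2_ker : LinearMap.ker (S2 n).g.hom = ⊤ := by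
  ext x
  simp only [LinearMap.mem_ker, Submodule.mem_top, iff_true]
  exact (rfl : (0 : Tmod n ⟶ Tmod n) x = 0)

def e1 : (LinearMap.ker (S2 n).g.hom) ≃ₗ[Rn n] Tmod n := LinearEquiv.ofTop _ (S2_ker n)

def el : (LinearMap.ker (S2 n).g.hom) ≃ₗ[ℤ] ℤ :=
  ((e1 n).restrictScalars ℤ).trans (ev n).toIntLinearEquiv

lemma el_apply (x : LinearMap.ker (S2 n).g.hom) : el n x = ev n x.1 := rfl

lemma el_toCycles (y : Tmod n) :
    el n ((S2 n).moduleCatToCycles y) = (n : ℤ) * ev n y := by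
  rw [el_apply]
  have hv : ((S2 n).moduleCatToCycles y).1 = (n : ℤ) • y := rfl
  rw [hv, map_zsmul, smul_eq_mul]

lemma card_aux : Nat.card (groupHomologyTor (Rep.trivial ℤ (Gn n) ℤ) 3) = n := by
  have e0 := ((forget (ModuleCat (Rn n))).mapIso (isoTot n)).toEquiv
  refine (Nat.card_congr e0).trans ?_
  set p := LinearMap.range (S2 n).moduleCatToCycles with hp
  have hmap : (p.restrictScalars ℤ).map ((el n : _ →ₗ[ℤ] _)) = Ideal.span {(n : ℤ)} := by
    ext z
    rw [Submodule.mem_map]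
    constructor
    · rintro ⟨x, hx, rfl⟩
      rw [Submodule.restrictScalars_mem, hp, LinearMap.mem_range] at hx
      obtain ⟨y, rfl⟩ := hx
      rw [Ideal.mem_span_singleton']
      exact ⟨ev n y, ((el_toCycles n y).trans (mul_comm _ _)).symm⟩
    · intro hz
      obtain ⟨a, ha⟩ := Ideal.mem_span_singleton'.mp hz
      refine ⟨(S2 n).moduleCatToCycles ((ev n).symm a), ?_, ?_⟩
      · rw [Submodule.restrictScalars_mem, hp, LinearMap.mem_range]
        exact ⟨_, rfl⟩
      · show el n ((S2 n).moduleCatToCycles ((ev n).symm a)) = z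
        rw [el_toCycles, AddEquiv.apply_symm_apply, mul_comm, ha]
  have e2 := Submodule.Quotient.equiv (p.restrictScalars ℤ) (Ideal.span {(n : ℤ)}) (el n) hmap
  have e3 := Submodule.Quotient.restrictScalarsEquiv ℤ p
  show Nat.card (LinearMap.ker (S2 n).g.hom ⧸ p) = n
  rw [← Nat.card_congr e3.toEquiv, Nat.card_congr e2.toEquiv,
    Nat.card_congr (Int.quotientSpanNatEquivZMod n).toEquiv, Nat.card_zmod]


end

end H3Aux

/-- `|H₃(ℤ/nℤ; ℤ)| = n`: the third group homology of the cyclic group `ℤ/nℤ` with trivial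
integer coefficients has order `n` (Section 6.1.1). -/
theorem card_groupHomology_three_zmod (n : ℕ) (hn : 0 < n) :
    Nat.card (groupHomologyTor (Rep.trivial ℤ (Multiplicative (ZMod n)) ℤ) 3) = n := by
  have : NeZero n := ⟨hn.ne'⟩
  exact H3Aux.card_aux n
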